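/- arXiv:1504.03615 — 3 statements merged into one kernel-verified Lean document; each statement's English description precedes it below -/
import Mathlib

section
/- Let x < y < z be positive integers. Then in B one has the identity H_{xy} H_{xz} H_{yz} = H_{yz} − ε_x ε_y H_{xz} + ε_x ε_y H_{xy}, where H_{uv} = (T_v − δ_uδ_vT_u)/(T_v + δ_uδ_vT_u) for u < v. -/
/-- The variables `T x` of the polynomial ring `A[T₁, T₂, …]` (variables indexed by
positive integers); `Tvar A x = 0` for `x = 0` (unused here). -/
noncomputable def Tvar (A : Type*) [CommRing A] : ℕ → MvPolynomial {x : ℕ // 1 ≤ x} A :=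
  fun x => if h : 1 ≤ x then MvPolynomial.X ⟨x, h⟩ else 0

/-- The core polynomial identity in any commutative ring, given idempotents `dx`, `dy`. -/
lemma cubic_key {R : Type*} [CommRing R] (dx dy dz X Y Z : R)
    (hx : dx * dx = dx) (hy : dy * dy = dy) :
    (Y - dx * dy * X) * ((Z - dx * dz * X) * (Z - dy * dz * Y))
      = (Z - dy * dz * Y) * ((Y + dx * dy * X) * (Z + dx * dz * X))
        - (2 * dx - 1) * (2 * dy - 1) *
            ((Z - dx * dz * X) * ((Y + dx * dy * X) * (Z + dy * dz * Y)))
        + (2 * dx - 1) * (2 * dy - 1) *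
            ((Y - dx * dy * X) * ((Z + dx * dz * X) * (Z + dy * dz * Y))) := by
  linear_combination
    (4*dz*X*Y*Z - 4*dy*X*Z^2 - 8*dy*dz*X*Y*Z + 4*dy*dz^2*X*Y^2 + 8*dy^2*X*Z^2
      - 4*dy^2*dz*X*Y*Z - 8*dy^2*dz^2*X*Y^2 + 8*dy^3*dz*X*Y*Z) * hx
    + (4*dx*X*Z^2 + 4*dx*dz*X*Y*Z - 4*dx*dz^2*X*Y^2 + 4*dx*dy*dz*X*Y*Z) * hy

/-- `X i + C c * X j` is a non-zero-divisor in a multivariate polynomial ring when `i ≠ j`. -/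
lemma X_add_C_mul_X_mem_nonZeroDivisors {A : Type*} [CommRing A] {σ : Type*}
    (i j : σ) (h : j ≠ i) (c : A) :
    (MvPolynomial.X i + MvPolynomial.C c * MvPolynomial.X j)
      ∈ nonZeroDivisors (MvPolynomial σ A) := by
  classical
  let e : σ ≃ Option {k : σ // k ≠ i} :=
    { toFun := fun s => if hs : s = i then none else some ⟨s, hs⟩
      invFun := fun o => o.elim i Subtype.val
      left_inv := fun s => by by_cases hs : s = i <;> simp [hs]
      right_inv := fun o => by
        match o with
        | none => simp
        | some ⟨s, hs⟩ => simp [dif_neg hs]; exact dif_neg hs }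
  let φ : MvPolynomial σ A ≃ₐ[A] Polynomial (MvPolynomial {k : σ // k ≠ i} A) :=
    (MvPolynomial.renameEquiv A e).trans (MvPolynomial.optionEquivLeft A _)
  have hei : e i = none := dif_pos rfl
  have hej : e j = some ⟨j, h⟩ := dif_neg h
  have hφ : φ (MvPolynomial.X i + MvPolynomial.C c * MvPolynomial.X j)
      = Polynomial.X + Polynomial.C (MvPolynomial.C c * MvPolynomial.X ⟨j, h⟩) := by
    simp only [φ, AlgEquiv.trans_apply, map_add, map_mul, MvPolynomial.renameEquiv_apply,
      MvPolynomial.rename_X, MvPolynomial.rename_C, hei, hej,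
      MvPolynomial.optionEquivLeft_X_none, MvPolynomial.optionEquivLeft_X_some,
      MvPolynomial.optionEquivLeft_C]
  have hm : (Polynomial.X + Polynomial.C (MvPolynomial.C c *
      MvPolynomial.X (⟨j, h⟩ : {k : σ // k ≠ i}))).Monic :=
    Polynomial.monic_X_add_C _
  have hmem := hm.mem_nonZeroDivisors
  rw [← hφ, ← MulEquivClass.map_nonZeroDivisors φ.toRingEquiv] at hmem
  obtain ⟨q, hq, hq2⟩ := hmem
  rwa [← φ.injective hq2]

/-- `A` is a commutative ring with elements `δ x` for positive `x` satisfying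
`δ x ^ 2 = δ x`; `ε x = 2 δ x - 1`.  `B` is the localization of `A[T₁, T₂, …]` at the
multiplicative set of non-zero-divisors, with
`H u v = (T v - δ u δ v T u)/(T v + δ u δ v T u)` for `u < v` positive, characterized by
`H u v * (T v + δ u δ v T u) = T v - δ u δ v T u`.  Then for positive integers `x < y < z`:
`H x y * H x z * H y z = H y z - ε x ε y H x z + ε x ε y H x y`. -/
theorem cubic_H_identity
    {A : Type*} [CommRing A]
    (δ : ℕ → A) (hδ : ∀ u, 1 ≤ u → δ u * δ u = δ u)
    (B : Type*) [CommRing B] [Algebra (MvPolynomial {x : ℕ // 1 ≤ x} A) B]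
    [IsLocalization (nonZeroDivisors (MvPolynomial {x : ℕ // 1 ≤ x} A)) B]
    (H : ℕ → ℕ → B)
    (hH : ∀ u v, 1 ≤ u → u < v →
      H u v * algebraMap (MvPolynomial {x : ℕ // 1 ≤ x} A) B
          (Tvar A v + MvPolynomial.C (δ u * δ v) * Tvar A u)
        = algebraMap (MvPolynomial {x : ℕ // 1 ≤ x} A) B
            (Tvar A v - MvPolynomial.C (δ u * δ v) * Tvar A u))
    (x y z : ℕ) (hx : 1 ≤ x) (hxy : x < y) (hyz : y < z) :
    H x y * H x z * H y z
      = H y z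
        - algebraMap (MvPolynomial {x : ℕ // 1 ≤ x} A) B
            (MvPolynomial.C ((2 * δ x - 1) * (2 * δ y - 1))) * H x z
        + algebraMap (MvPolynomial {x : ℕ // 1 ≤ x} A) B
            (MvPolynomial.C ((2 * δ x - 1) * (2 * δ y - 1))) * H x y := by
  have hy : 1 ≤ y := hx.trans hxy.le
  have hz : 1 ≤ z := hy.trans hyz.le
  have hxz : x < z := hxy.trans hyz
  set P := MvPolynomial {x : ℕ // 1 ≤ x} A with hP
  set F := algebraMap P B with hF
  have tx : Tvar A x = MvPolynomial.X ⟨x, hx⟩ := dif_pos hx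
  have ty : Tvar A y = MvPolynomial.X ⟨y, hy⟩ := dif_pos hy
  have tz : Tvar A z = MvPolynomial.X ⟨z, hz⟩ := dif_pos hz
  have exy := hH x y hx hxy
  have exz := hH x z hx hxz
  have eyz := hH y z hy hyz
  rw [tx, ty] at exy
  rw [tx, tz] at exz
  rw [ty, tz] at eyz
  have nexy : (⟨x, hx⟩ : {x : ℕ // 1 ≤ x}) ≠ ⟨y, hy⟩ := by
    simp [Subtype.ext_iff, Nat.ne_of_lt hxy]
  have nexz : (⟨x, hx⟩ : {x : ℕ // 1 ≤ x}) ≠ ⟨z, hz⟩ := by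
    simp [Subtype.ext_iff, Nat.ne_of_lt hxz]
  have neyz : (⟨y, hy⟩ : {x : ℕ // 1 ≤ x}) ≠ ⟨z, hz⟩ := by
    simp [Subtype.ext_iff, Nat.ne_of_lt hyz]
  have u1 : IsUnit (F (MvPolynomial.X ⟨y, hy⟩
      + MvPolynomial.C (δ x * δ y) * MvPolynomial.X ⟨x, hx⟩)) :=
    IsLocalization.map_units B
      ⟨_, X_add_C_mul_X_mem_nonZeroDivisors _ _ nexy (δ x * δ y)⟩
  have u2 : IsUnit (F (MvPolynomial.X ⟨z, hz⟩
      + MvPolynomial.C (δ x * δ z) * MvPolynomial.X ⟨x, hx⟩)) :=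
    IsLocalization.map_units B
      ⟨_, X_add_C_mul_X_mem_nonZeroDivisors _ _ nexz (δ x * δ z)⟩
  have u3 : IsUnit (F (MvPolynomial.X ⟨z, hz⟩
      + MvPolynomial.C (δ y * δ z) * MvPolynomial.X ⟨y, hy⟩)) :=
    IsLocalization.map_units B
      ⟨_, X_add_C_mul_X_mem_nonZeroDivisors _ _ neyz (δ y * δ z)⟩
  have hDx : F (MvPolynomial.C (δ x)) * F (MvPolynomial.C (δ x)) = F (MvPolynomial.C (δ x)) := by
    rw [← map_mul, ← map_mul, hδ x hx]
  have hDy : F (MvPolynomial.C (δ y)) * F (MvPolynomial.C (δ y)) = F (MvPolynomial.C (δ y)) := by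
    rw [← map_mul, ← map_mul, hδ y hy]
  have keyB := cubic_key (F (MvPolynomial.C (δ x))) (F (MvPolynomial.C (δ y)))
    (F (MvPolynomial.C (δ z))) (F (MvPolynomial.X ⟨x, hx⟩)) (F (MvPolynomial.X ⟨y, hy⟩))
    (F (MvPolynomial.X ⟨z, hz⟩)) hDx hDy
  refine (u1.mul (u2.mul u3)).mul_right_cancel ?_
  simp only [map_add, map_mul, map_sub, map_one, map_ofNat] at exy exz eyz ⊢
  set ax := F (MvPolynomial.C (δ x))
  set ay := F (MvPolynomial.C (δ y))
  set az := F (MvPolynomial.C (δ z))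
  set tX := F (MvPolynomial.X ⟨x, hx⟩)
  set tY := F (MvPolynomial.X ⟨y, hy⟩)
  set tZ := F (MvPolynomial.X ⟨z, hz⟩)
  linear_combination
    (H x z * (tZ + ax * az * tX) * (H y z * (tZ + ay * az * tY))
        - (2 * ax - 1) * (2 * ay - 1) * ((tZ + ax * az * tX) * (tZ + ay * az * tY))) * exy
    + ((tY - ax * ay * tX) * (H y z * (tZ + ay * az * tY))
        + (2 * ax - 1) * (2 * ay - 1) * ((tY + ax * ay * tX) * (tZ + ay * az * tY))) * exz
    + ((tY - ax * ay * tX) * (tZ - ax * az * tX)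
        - (tY + ax * ay * tX) * (tZ + ax * az * tX)) * eyz
    + keyB
end

section
/- For every p ∈ ℤ^n, the set of raising operator monomials m = (m_{ij})_{1≤i<j≤n} (families of nonnegative integers) such that R_m(p) ∈ P is finite. -/
/-- The action of the raising operator monomial `∏_{i<j} R_{ij}^{m i j}` on `p ∈ ℤ^n`
(indices `1, …, n`): it raises the `k`-th index by `Σ_{j>k} m k j` and lowers it by
`Σ_{i<k} m i k`. -/
def RapplyN (n : ℕ) (m : ℕ → ℕ → ℕ) (p : ℕ → ℤ) : ℕ → ℤ :=
  fun k => p k + (∑ j ∈ Finset.Icc (k + 1) n, (m k j : ℤ)) - ∑ i ∈ Finset.Icc 1 (k - 1), (m i k : ℤ)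

/-- The set `P ⊂ ℤ^n` of `p = (p 1, …, p n)` with `p k + p (k+1) + ⋯ + p n ≥ 0` for all
`1 ≤ k ≤ n`. -/
def PsetN (n : ℕ) : Set (ℕ → ℤ) :=
  {p | ∀ k, 1 ≤ k → k ≤ n → 0 ≤ ∑ j ∈ Finset.Icc k n, p j}

/-- A family of nonnegative integers indexed by the pairs `1 ≤ i < j ≤ n` (a raising
operator monomial), encoded as a function vanishing off that index set. -/
def IsRaisMon (n : ℕ) (m : ℕ → ℕ → ℕ) : Prop :=
  ∀ i j, ¬(1 ≤ i ∧ i < j ∧ j ≤ n) → m i j = 0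

lemma aux_sum_rewrite (n k : ℕ) (m : ℕ → ℕ → ℕ) (hm : IsRaisMon n m)
    (hk1 : 1 ≤ k) (hkn : k ≤ n) :
    ∑ l ∈ Finset.Icc k n,
        ((∑ j ∈ Finset.Icc (l + 1) n, (m l j : ℤ)) - ∑ i ∈ Finset.Icc 1 (l - 1), (m i l : ℤ))
      = - ∑ i ∈ Finset.Icc 1 (k - 1), ∑ j ∈ Finset.Icc k n, (m i j : ℤ) := by
  rw [Finset.sum_sub_distrib]
  have hA : ∑ l ∈ Finset.Icc k n, ∑ j ∈ Finset.Icc (l + 1) n, (m l j : ℤ)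
      = ∑ l ∈ Finset.Icc k n, ∑ j ∈ Finset.Icc k n, (m l j : ℤ) := by
    refine Finset.sum_congr rfl fun l hl => ?_
    rw [Finset.mem_Icc] at hl
    refine Finset.sum_subset ?_ ?_
    · exact Finset.Icc_subset_Icc_left (by omega)
    · intro j hj hj'
      rw [Finset.mem_Icc] at hj
      rw [Finset.mem_Icc] at hj'
      have : m l j = 0 := hm l j (by omega)
      simp [this]
  have hB : ∑ l ∈ Finset.Icc k n, ∑ i ∈ Finset.Icc 1 (l - 1), (m i l : ℤ)
      = ∑ l ∈ Finset.Icc k n, ∑ i ∈ Finset.Icc 1 n, (m i l : ℤ) := by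
    refine Finset.sum_congr rfl fun l hl => ?_
    rw [Finset.mem_Icc] at hl
    refine Finset.sum_subset ?_ ?_
    · exact Finset.Icc_subset_Icc_right (by omega)
    · intro i hi hi'
      rw [Finset.mem_Icc] at hi
      rw [Finset.mem_Icc] at hi'
      have : m i l = 0 := hm i l (by omega)
      simp [this]
  rw [hA, hB]
  rw [show ∑ l ∈ Finset.Icc k n, ∑ i ∈ Finset.Icc 1 n, (m i l : ℤ)
      = ∑ i ∈ Finset.Icc 1 n, ∑ l ∈ Finset.Icc k n, (m i l : ℤ) from Finset.sum_comm]
  have hsplit : ∑ i ∈ Finset.Icc 1 n, ∑ l ∈ Finset.Icc k n, (m i l : ℤ)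
      = (∑ i ∈ Finset.Icc 1 (k - 1), ∑ l ∈ Finset.Icc k n, (m i l : ℤ))
        + ∑ i ∈ Finset.Icc k n, ∑ l ∈ Finset.Icc k n, (m i l : ℤ) := by
    have h1 : Finset.Icc 1 n = Finset.Ioc 0 n := by
      rw [← Finset.Icc_add_one_left_eq_Ioc, zero_add]
    have h2 : Finset.Icc 1 (k - 1) = Finset.Ioc 0 (k - 1) := by
      rw [← Finset.Icc_add_one_left_eq_Ioc, zero_add]
    have h3 : Finset.Icc k n = Finset.Ioc (k - 1) n := by
      rw [← Finset.Icc_add_one_left_eq_Ioc]; congr 1; omega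
    rw [h1, h2, h3]
    exact (Finset.sum_Ioc_consecutive _ (by omega) (by omega)).symm
  rw [hsplit]
  ring

lemma aux_bound (n : ℕ) (p : ℕ → ℤ) (m : ℕ → ℕ → ℕ) (hm : IsRaisMon n m)
    (hP : RapplyN n m p ∈ PsetN n) (i j : ℕ) (h1 : 1 ≤ i) (h2 : i < j) (h3 : j ≤ n) :
    (m i j : ℤ) ≤ ∑ l ∈ Finset.Icc (i + 1) n, p l := by
  have hk1 : 1 ≤ i + 1 := by omega
  have hkn : i + 1 ≤ n := by omega
  have h := hP (i + 1) hk1 hkn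
  have hre : ∀ l ∈ Finset.Icc (i + 1) n, RapplyN n m p l
      = p l + ((∑ j' ∈ Finset.Icc (l + 1) n, (m l j' : ℤ))
          - ∑ i' ∈ Finset.Icc 1 (l - 1), (m i' l : ℤ)) := by
    intro l _; unfold RapplyN; ring
  rw [Finset.sum_congr rfl hre, Finset.sum_add_distrib,
    aux_sum_rewrite n (i + 1) m hm hk1 hkn] at h
  have hC : (m i j : ℤ) ≤ ∑ i' ∈ Finset.Icc 1 (i + 1 - 1), ∑ j' ∈ Finset.Icc (i + 1) n, (m i' j' : ℤ) := by
    have hmem : i ∈ Finset.Icc 1 (i + 1 - 1) := by simp [Finset.mem_Icc]; omega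
    have hmem2 : j ∈ Finset.Icc (i + 1) n := by simp [Finset.mem_Icc]; omega
    calc (m i j : ℤ) ≤ ∑ j' ∈ Finset.Icc (i + 1) n, (m i j' : ℤ) :=
          Finset.single_le_sum (f := fun j' => (m i j' : ℤ))
            (fun x _ => Int.natCast_nonneg _) hmem2
      _ ≤ _ := Finset.single_le_sum
            (f := fun i' => ∑ j' ∈ Finset.Icc (i + 1) n, (m i' j' : ℤ))
            (fun x _ => Finset.sum_nonneg fun y _ => Int.natCast_nonneg _) hmem
  omega

/-- For every `p ∈ ℤ^n`, the set of raising operator monomials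
`m = (m i j)_{1 ≤ i < j ≤ n}` such that `R_m(p) ∈ P` is finite. -/
theorem raising_monomials_finite (n : ℕ) (hn : 1 ≤ n) (p : ℕ → ℤ) :
    {m : ℕ → ℕ → ℕ | IsRaisMon n m ∧ RapplyN n m p ∈ PsetN n}.Finite := by
  classical
  set B : ℕ := (Finset.Icc 1 n).sup (fun k => (∑ l ∈ Finset.Icc k n, p l).toNat) with hBdef
  set S := {m : ℕ → ℕ → ℕ | IsRaisMon n m ∧ RapplyN n m p ∈ PsetN n} with hS
  have keyB : ∀ m ∈ S, ∀ i j, m i j ≤ B := by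
    intro m hm i j
    by_cases hc : 1 ≤ i ∧ i < j ∧ j ≤ n
    · obtain ⟨h1, h2, h3⟩ := hc
      have hb := aux_bound n p m hm.1 hm.2 i j h1 h2 h3
      have hmemk : i + 1 ∈ Finset.Icc 1 n := by simp [Finset.mem_Icc]; omega
      have hle : (∑ l ∈ Finset.Icc (i + 1) n, p l).toNat ≤ B :=
        Finset.le_sup (f := fun k => (∑ l ∈ Finset.Icc k n, p l).toNat) hmemk
      omega
    · rw [hm.1 i j hc]; exact Nat.zero_le _
  set ι := (Finset.Icc 1 n ×ˢ Finset.Icc 1 n : Finset (ℕ × ℕ)) with hι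
  have : Set.InjOn (fun (m : ℕ → ℕ → ℕ) => fun (q : ι) => min (m q.1.1 q.1.2) B) S := by
    intro m₁ hm₁ m₂ hm₂ heq
    funext i j
    by_cases hc : 1 ≤ i ∧ i < j ∧ j ≤ n
    · have hmem : (i, j) ∈ ι := by
        simp only [hι, Finset.mem_product, Finset.mem_Icc]; omega
      have := congrFun heq ⟨(i, j), hmem⟩
      simp only at this
      rw [min_eq_left (keyB m₁ hm₁ i j), min_eq_left (keyB m₂ hm₂ i j)] at this
      exact this
    · rw [hm₁.1 i j hc, hm₂.1 i j hc]
  have hfin : (((fun (m : ℕ → ℕ → ℕ) => fun (q : ι) => min (m q.1.1 q.1.2) B) '' S)).Finite := by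
    have : ((fun (m : ℕ → ℕ → ℕ) => fun (q : ι) => min (m q.1.1 q.1.2) B) '' S)
        ⊆ {f : ι → ℕ | ∀ q, f q ≤ B} := by
      rintro f ⟨m, _, rfl⟩ q
      exact min_le_right _ _
    refine Set.Finite.subset ?_ this
    have : {f : ι → ℕ | ∀ q, f q ≤ B} ⊆ Set.pi Set.univ (fun _ : ι => Set.Iic B) := by
      intro f hf q _; exact hf q
    exact Set.Finite.subset (Set.Finite.pi fun _ => Set.finite_Iic B) this
  exact Set.Finite.of_finite_image hfin this
end

section
/- Let λ = (λ_1 ≥ λ_2 ≥ ⋯ ≥ λ_ℓ ≥ 0) be a partition. Then the Schur determinant Δ_λ(c(1), …, c(ℓ)) = det(c(i)_{λ_i + j − i})_{1≤i,j≤ℓ} is equal to Σ_b (−1)^{|b|} ∏_{k=1}^ℓ c(k)_{R_b(λ)_k}, the sum over all families b = (b_{ij})_{1≤i<j≤ℓ} with b_{ij} ∈ {0,1}, where |b| = Σ b_{ij}; that is, Δ_λ(c(1), …, c(ℓ)) equals the evaluation of the raising operator R^{(ℓ)} = ∏_{1≤i<j≤ℓ} (1 − R_{ij}) applied to c(1)_{λ_1}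 ⋯ c(ℓ)_{λ_ℓ}. -/
/-- `|b| = Σ_{1 ≤ i < j ≤ ℓ} b i j`. -/
def degFam (ℓ : ℕ) (b : ℕ → ℕ → ℕ) : ℕ :=
  ∑ i ∈ Finset.Icc 1 ℓ, ∑ j ∈ Finset.Icc (i + 1) ℓ, b i j

noncomputable section SchurAux
open Finset

abbrev Rg : Type := MonoidAlgebra ℤ (Multiplicative (ℕ → ℤ))

def Um (e : ℕ → ℤ) : Rg := MonoidAlgebra.single (Multiplicative.ofAdd e) 1

lemma Um_mul (a b : ℕ → ℤ) : Um a * Um b = Um (a + b) := by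
  simp [Um, MonoidAlgebra.single_mul_single, ← ofAdd_add]

lemma Um_zero : Um 0 = 1 := rfl

lemma Um_prod {ι : Type*} (s : Finset ι) (g : ι → ℕ → ℤ) :
    ∏ p ∈ s, Um (g p) = Um (∑ p ∈ s, g p) := by
  induction s using Finset.cons_induction with
  | empty => simp [Um_zero]
  | cons a s ha ih => rw [prod_cons, sum_cons, ih, Um_mul]

lemma Um_pow (a : ℕ → ℤ) (m : ℕ) : (Um a) ^ m = Um ((m : ℤ) • a) := by
  induction m with
  | zero => simp [Um_zero]
  | succ k ih =>
    rw [pow_succ, ih, Um_mul]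
    congr 1
    push_cast
    module

def Ev {A : Type*} [CommRing A] (v : (ℕ → ℤ) → A) : Rg →ₗ[ℤ] A :=
  Finsupp.linearCombination ℤ (fun e : Multiplicative (ℕ → ℤ) => v (Multiplicative.toAdd e))
    ∘ₗ (MonoidAlgebra.coeffLinearEquiv ℤ).toLinearMap

lemma Ev_Um {A : Type*} [CommRing A] (v : (ℕ → ℤ) → A) (a : ℕ → ℤ) :
    Ev v (Um a) = v a := by
  show Finsupp.linearCombination ℤ _ (Finsupp.single (Multiplicative.ofAdd a) (1:ℤ)) = v a
  rw [Finsupp.linearCombination_single, one_smul]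
  rfl

end SchurAux

section SchurAux2
open Finset

def Pn (n : ℕ) : Finset (Σ _ : ℕ, ℕ) := (Icc 1 n).sigma fun i => Icc (i+1) n

lemma mem_Pn {n : ℕ} {p : Σ _ : ℕ, ℕ} : p ∈ Pn n ↔ 1 ≤ p.1 ∧ p.1 < p.2 ∧ p.2 ≤ n := by
  rcases p with ⟨i, j⟩
  simp only [Pn, Finset.mem_sigma, Finset.mem_Icc]
  omega

def dlt (i : ℕ) : ℕ → ℤ := fun x => if x = i then 1 else 0

lemma bridge {M : Type*} [CommMonoid M] (n : ℕ) (F : ℕ → ℕ → M) :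
    ∏ x ∈ Pn n, F x.1 x.2 = ∏ i : Fin n, ∏ j ∈ Ioi i, F (i.1+1) (j.1+1) := by
  rw [← Finset.prod_sigma (Finset.univ : Finset (Fin n)) (fun i => Ioi i)
      (fun x => F (x.1.1+1) (x.2.1+1))]
  refine Finset.prod_bij' (i := fun (p : Σ _ : ℕ, ℕ) hp =>
      (⟨⟨p.1 - 1, by rw [mem_Pn] at hp; omega⟩, ⟨p.2 - 1, by rw [mem_Pn] at hp; omega⟩⟩ :
        Σ _ : Fin n, Fin n))
    (j := fun q _ => (⟨q.1.1 + 1, q.2.1 + 1⟩ : Σ _ : ℕ, ℕ)) ?_ ?_ ?_ ?_ ?_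
  · intro p hp
    rw [mem_Pn] at hp
    simp only [Finset.mem_sigma, Finset.mem_univ, Finset.mem_Ioi, true_and, Fin.lt_def]
    omega
  · intro q hq
    simp only [Finset.mem_sigma, Finset.mem_univ, Finset.mem_Ioi, true_and, Fin.lt_def] at hq
    rw [mem_Pn]
    have := q.2.isLt
    dsimp only
    omega
  · intro p hp
    rw [mem_Pn] at hp
    ext <;> simp <;> omega
  · intro q hq
    ext <;> simp
  · intro p hp
    rw [mem_Pn] at hp
    have h1 : p.1 - 1 + 1 = p.1 := by omega
    have h2 : p.2 - 1 + 1 = p.2 := by omega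
    simp [h1, h2]

end SchurAux2

section SchurAux3
open Finset Equiv

lemma key1 (n : ℕ) :
    ∏ p ∈ Pn n, (1 - Um (dlt p.1 - dlt p.2)) =
    ∑ σ : Equiv.Perm (Fin n), (Equiv.Perm.sign σ : ℤ) •
      Um ((∑ i : Fin n, (i.1 : ℤ) • dlt (σ i + 1)) - ∑ p ∈ Pn n, dlt p.2) := by
  set w := ∑ p ∈ Pn n, dlt p.2 with hw
  have hmulw : (∏ p ∈ Pn n, (1 - Um (dlt p.1 - dlt p.2))) * Um w =
      ∏ p ∈ Pn n, (Um (dlt p.2) - Um (dlt p.1)) := by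
    rw [hw, ← Um_prod, ← Finset.prod_mul_distrib]
    refine Finset.prod_congr rfl fun p hp => ?_
    rw [sub_mul, one_mul, Um_mul, sub_add_cancel]
  have hvan : ∏ p ∈ Pn n, (Um (dlt p.2) - Um (dlt p.1)) =
      Matrix.det (Matrix.vandermonde fun i : Fin n => Um (dlt (i.1+1))) := by
    rw [Matrix.det_vandermonde]
    exact bridge n (fun a b => Um (dlt b) - Um (dlt a))
  have hdet : Matrix.det (Matrix.vandermonde fun i : Fin n => Um (dlt (i.1+1))) =
      ∑ σ : Equiv.Perm (Fin n), (Equiv.Perm.sign σ : ℤ) •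
        Um (∑ i : Fin n, (i.1 : ℤ) • dlt (σ i + 1)) := by
    rw [Matrix.det_apply]
    refine Finset.sum_congr rfl fun σ _ => ?_
    rw [Units.smul_def]
    congr 1
    have : ∀ i : Fin n, Matrix.vandermonde (fun i : Fin n => Um (dlt (i.1+1))) (σ i) i
        = Um ((i.1 : ℤ) • dlt (σ i + 1)) := by
      intro i
      rw [Matrix.vandermonde_apply, Um_pow]
    rw [Finset.prod_congr rfl (fun i _ => this i), Um_prod]
  have hinv : Um w * Um (-w) = 1 := by
    rw [Um_mul, add_neg_cancel, Um_zero]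
  calc ∏ p ∈ Pn n, (1 - Um (dlt p.1 - dlt p.2))
      = (∏ p ∈ Pn n, (1 - Um (dlt p.1 - dlt p.2))) * (Um w * Um (-w)) := by
        rw [hinv, mul_one]
    _ = ((∏ p ∈ Pn n, (1 - Um (dlt p.1 - dlt p.2))) * Um w) * Um (-w) := by ring
    _ = (∑ σ : Equiv.Perm (Fin n), (Equiv.Perm.sign σ : ℤ) •
          Um (∑ i : Fin n, (i.1 : ℤ) • dlt (σ i + 1))) * Um (-w) := by
        rw [hmulw, hvan, hdet]
    _ = _ := by
        rw [Finset.sum_mul]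
        refine Finset.sum_congr rfl fun σ _ => ?_
        rw [smul_mul_assoc, Um_mul, sub_eq_add_neg]

end SchurAux3

section SchurAux4
open Finset

lemma prod_neg_Um {ι : Type*} (t : Finset ι) (e : ι → ℕ → ℤ) :
    ∏ p ∈ t, (-Um (e p)) = ((-1:ℤ) ^ t.card) • Um (∑ p ∈ t, e p) := by
  induction t using Finset.cons_induction with
  | empty => simp [Um_zero]
  | cons a s ha ih =>
    rw [prod_cons, sum_cons, card_cons, ih, mul_smul_comm, neg_mul, Um_mul,
      pow_succ, mul_comm ((-1:ℤ)^s.card) (-1), mul_smul, neg_one_smul, smul_neg]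

lemma key2 (n : ℕ) :
    ∏ p ∈ Pn n, (1 - Um (dlt p.1 - dlt p.2)) =
    ∑ t ∈ (Pn n).powerset, ((-1 : ℤ) ^ t.card) • Um (∑ p ∈ t, (dlt p.1 - dlt p.2)) := by
  have h : ∀ p ∈ Pn n, (1 : Rg) - Um (dlt p.1 - dlt p.2)
      = (-Um (dlt p.1 - dlt p.2)) + 1 := fun _ _ => by ring
  rw [Finset.prod_congr rfl h, Finset.prod_add]
  refine Finset.sum_congr rfl fun t ht => ?_
  rw [Finset.prod_const_one, mul_one, prod_neg_Um]

end SchurAux4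

section SchurAux5
open Finset Equiv

lemma key3 {A : Type*} [CommRing A] (n : ℕ) (v : (ℕ → ℤ) → A) :
    ∑ t ∈ (Pn n).powerset, ((-1:ℤ) ^ t.card) • v (∑ p ∈ t, (dlt p.1 - dlt p.2)) =
    ∑ σ : Equiv.Perm (Fin n), (Equiv.Perm.sign σ : ℤ) •
      v ((∑ i : Fin n, (i.1:ℤ) • dlt (σ i + 1)) - ∑ p ∈ Pn n, dlt p.2) := by
  have h := congrArg (Ev v) ((key2 n).symm.trans (key1 n))
  rw [map_sum, map_sum] at h
  simp only [map_smul, Ev_Um] at h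
  exact h

lemma prod_Icc_fin {M : Type*} [CommMonoid M] (n : ℕ) (g : ℕ → M) :
    ∏ k ∈ Icc 1 n, g k = ∏ k : Fin n, g (k.1+1) := by
  rw [Fin.prod_univ_eq_prod_range (fun k => g (k+1)) n]
  refine Finset.prod_bij' (i := fun k _ => k - 1) (j := fun k _ => k + 1) ?_ ?_ ?_ ?_ ?_
  · intro a ha; rw [Finset.mem_Icc] at ha; rw [Finset.mem_range]; omega
  · intro a ha; rw [Finset.mem_range] at ha; rw [Finset.mem_Icc]; omega
  · intro a ha; rw [Finset.mem_Icc] at ha; omega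
  · intro a ha; omega
  · intro a ha
    rw [Finset.mem_Icc] at ha
    congr 1
    omega

lemma gsig_eval (n : ℕ) (σ : Equiv.Perm (Fin n)) (k : Fin n) :
    (∑ i : Fin n, (i.1:ℤ) • dlt (σ i + 1)) (k.1+1) = ((σ⁻¹ k).1 : ℤ) := by
  rw [Finset.sum_apply]
  have h : ∀ i : Fin n, ((i.1:ℤ) • dlt (↑(σ i) + 1)) (k.1+1)
      = if i = σ⁻¹ k then (i.1:ℤ) else 0 := by
    intro i
    simp only [Pi.smul_apply, dlt, smul_eq_mul]
    by_cases h : i = σ⁻¹ k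
    · subst h
      simp
    · have hne : ¬(k.1 + 1 = (σ i).1 + 1) := by
        intro hh
        apply h
        have hk : σ i = k := Fin.ext (by omega)
        rw [← hk]
        simp
      rw [if_neg hne, if_neg h, mul_zero]
  rw [Finset.sum_congr rfl (fun i _ => h i), Finset.sum_ite_eq' Finset.univ (σ⁻¹ k)]
  simp

lemma w_eval (n : ℕ) (k : Fin n) : (∑ p ∈ Pn n, dlt p.2) (k.1+1) = (k.1 : ℤ) := by
  rw [Finset.sum_apply, Pn, Finset.sum_sigma]
  have inner : ∀ i ∈ Icc 1 n, (∑ j ∈ Icc (i+1) n, dlt j (k.1+1))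
      = if k.1+1 ∈ Icc (i+1) n then (1:ℤ) else 0 := by
    intro i _
    simp only [dlt]
    exact Finset.sum_ite_eq (Icc (i+1) n) (k.1+1) (fun _ => (1:ℤ))
  rw [Finset.sum_congr rfl inner, Finset.sum_boole]
  have hfil : Finset.filter (fun i => k.1+1 ∈ Icc (i+1) n) (Icc 1 n) = Icc 1 k.1 := by
    ext a
    have := k.isLt
    simp only [Finset.mem_filter, Finset.mem_Icc]
    omega
  rw [hfil, Nat.card_Icc]
  simp

end SchurAux5

section SchurAux6
open Finset Equiv

lemma key4 {A : Type*} [CommRing A] (n : ℕ) (c : ℕ → ℤ → A) (lam : ℕ → ℤ) :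
    ∑ σ : Equiv.Perm (Fin n), (Equiv.Perm.sign σ : ℤ) •
      (∏ k ∈ Icc 1 n, c k (lam k +
        ((∑ i : Fin n, (i.1:ℤ) • dlt (σ i + 1)) - ∑ p ∈ Pn n, dlt p.2) k))
    = Matrix.det (Matrix.of fun i j : Fin n =>
        c (i.1+1) (lam (i.1+1) + (j.1:ℤ) - (i.1:ℤ))) := by
  rw [Matrix.det_apply]
  refine Finset.sum_congr rfl fun σ _ => ?_
  rw [Units.smul_def]
  congr 1
  rw [prod_Icc_fin]
  have hterm : ∀ k : Fin n, c (k.1+1) (lam (k.1+1) +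
      ((∑ i : Fin n, (i.1:ℤ) • dlt (σ i + 1)) - ∑ p ∈ Pn n, dlt p.2) (k.1+1))
      = c (k.1+1) (lam (k.1+1) + ((σ⁻¹ k).1:ℤ) - (k.1:ℤ)) := by
    intro k
    rw [Pi.sub_apply, gsig_eval, w_eval]
    congr 1
    ring
  rw [Finset.prod_congr rfl (fun k _ => hterm k),
    ← Equiv.prod_comp σ (fun k : Fin n => c (k.1+1) (lam (k.1+1) + ((σ⁻¹ k).1:ℤ) - (k.1:ℤ)))]
  refine Finset.prod_congr rfl fun i _ => ?_
  simp [Matrix.of_apply]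

end SchurAux6

section SchurAux7
open Finset

def Phi (t : Finset (Σ _ : ℕ, ℕ)) : ℕ → ℕ → ℕ :=
  fun i j => if (⟨i,j⟩ : Σ _ : ℕ, ℕ) ∈ t then 1 else 0

lemma degFam_Phi (n : ℕ) (t : Finset (Σ _ : ℕ, ℕ)) (ht : t ⊆ Pn n) :
    degFam n (Phi t) = t.card := by
  unfold degFam Phi
  rw [← Finset.sum_sigma (Icc 1 n) (fun i => Icc (i+1) n)
    (fun p : Σ _ : ℕ, ℕ => if p ∈ t then 1 else 0)]
  rw [show ((Icc 1 n).sigma fun i => Icc (i+1) n) = Pn n from rfl]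
  rw [Finset.sum_ite_mem, Finset.inter_eq_right.mpr ht, Finset.sum_const, smul_eq_mul, mul_one]

lemma row_Phi (n k : ℕ) (t : Finset (Σ _ : ℕ, ℕ)) (ht : t ⊆ Pn n) :
    ∑ j ∈ Icc (k+1) n, (Phi t k j : ℤ) = ∑ p ∈ t, dlt p.1 k := by
  have l1 : ∑ j ∈ Icc (k+1) n, (Phi t k j : ℤ)
      = (((Icc (k+1) n).filter (fun j => (⟨k,j⟩ : Σ _:ℕ,ℕ) ∈ t)).card : ℤ) := by
    simp only [Phi, Nat.cast_ite, Nat.cast_one, Nat.cast_zero]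
    rw [Finset.sum_boole]
  have l2 : ∑ p ∈ t, dlt p.1 k = ((t.filter (fun p => k = p.1)).card : ℤ) := by
    simp only [dlt]
    rw [Finset.sum_boole]
  rw [l1, l2]
  congr 1
  refine Finset.card_bij' (i := fun j _ => (⟨k, j⟩ : Σ _:ℕ,ℕ)) (j := fun p _ => p.2) ?_ ?_ ?_ ?_
  · intro a ha
    rw [Finset.mem_filter] at ha ⊢
    exact ⟨ha.2, rfl⟩
  · intro p hp
    rw [Finset.mem_filter] at hp ⊢
    obtain ⟨hpt, hpk⟩ := hp
    have hm := mem_Pn.mp (ht hpt)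
    constructor
    · rw [Finset.mem_Icc]; omega
    · have : (⟨k, p.2⟩ : Σ _:ℕ,ℕ) = p := by
        subst hpk; exact Sigma.eta p
      rw [this]; exact hpt
  · intro a ha; rfl
  · intro p hp
    rw [Finset.mem_filter] at hp
    obtain ⟨_, hpk⟩ := hp
    subst hpk; exact Sigma.eta p

lemma col_Phi (n k : ℕ) (t : Finset (Σ _ : ℕ, ℕ)) (ht : t ⊆ Pn n) :
    ∑ i ∈ Icc 1 (k-1), (Phi t i k : ℤ) = ∑ p ∈ t, dlt p.2 k := by
  have l1 : ∑ i ∈ Icc 1 (k-1), (Phi t i k : ℤ)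
      = (((Icc 1 (k-1)).filter (fun i => (⟨i,k⟩ : Σ _:ℕ,ℕ) ∈ t)).card : ℤ) := by
    simp only [Phi, Nat.cast_ite, Nat.cast_one, Nat.cast_zero]
    rw [Finset.sum_boole]
  have l2 : ∑ p ∈ t, dlt p.2 k = ((t.filter (fun p => k = p.2)).card : ℤ) := by
    simp only [dlt]
    rw [Finset.sum_boole]
  rw [l1, l2]
  congr 1
  refine Finset.card_bij' (i := fun i _ => (⟨i, k⟩ : Σ _:ℕ,ℕ)) (j := fun p _ => p.1) ?_ ?_ ?_ ?_
  · intro a ha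
    rw [Finset.mem_filter] at ha ⊢
    exact ⟨ha.2, rfl⟩
  · intro p hp
    rw [Finset.mem_filter] at hp ⊢
    obtain ⟨hpt, hpk⟩ := hp
    have hm := mem_Pn.mp (ht hpt)
    constructor
    · rw [Finset.mem_Icc]; omega
    · have : (⟨p.1, k⟩ : Σ _:ℕ,ℕ) = p := by
        subst hpk; exact Sigma.eta p
      rw [this]; exact hpt
  · intro a ha; rfl
  · intro p hp
    rw [Finset.mem_filter] at hp
    obtain ⟨_, hpk⟩ := hp
    subst hpk; exact Sigma.eta p

lemma Rapply_Phi (n : ℕ) (t : Finset (Σ _ : ℕ, ℕ)) (ht : t ⊆ Pn n) (lam : ℕ → ℤ) (k : ℕ) :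
    RapplyN n (Phi t) lam k = lam k + (∑ p ∈ t, (dlt p.1 - dlt p.2)) k := by
  unfold RapplyN
  rw [row_Phi n k t ht, col_Phi n k t ht, Finset.sum_apply]
  simp only [Pi.sub_apply, Finset.sum_sub_distrib]
  ring

end SchurAux7

section SchurAux8
open Finset

lemma Phi_image (n : ℕ) :
    {b : ℕ → ℕ → ℕ | (∀ i j, b i j ≤ 1) ∧ IsRaisMon n b} = Phi '' ↑((Pn n).powerset) := by
  ext b
  constructor
  · rintro ⟨hle, hrm⟩
    refine ⟨(Pn n).filter (fun p => b p.1 p.2 = 1), ?_, ?_⟩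
    · rw [Finset.mem_coe, Finset.mem_powerset]
      exact Finset.filter_subset _ _
    · funext i j
      simp only [Phi, Finset.mem_filter]
      by_cases hij : 1 ≤ i ∧ i < j ∧ j ≤ n
      · have hm : (⟨i,j⟩ : Σ _:ℕ,ℕ) ∈ Pn n := mem_Pn.mpr hij
        have hb := hle i j
        by_cases h1 : b i j = 1
        · rw [if_pos ⟨hm, h1⟩, h1]
        · have h0 : b i j = 0 := by omega
          rw [if_neg, h0]
          rintro ⟨_, hh⟩
          exact h1 hh
      · have h0 := hrm i j hij
        rw [if_neg, h0]
        rintro ⟨hm, _⟩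
        exact hij (mem_Pn.mp hm)
  · rintro ⟨t, ht, rfl⟩
    rw [Finset.mem_coe, Finset.mem_powerset] at ht
    constructor
    · intro i j
      simp only [Phi]
      split <;> omega
    · intro i j hij
      simp only [Phi]
      rw [if_neg]
      intro hm
      exact hij (mem_Pn.mp (ht hm))

lemma Phi_injOn (n : ℕ) : Set.InjOn Phi ↑((Pn n).powerset) := by
  intro t1 _ t2 _ he
  ext p
  have h := congrFun (congrFun he p.1) p.2
  simp only [Phi, Sigma.eta] at h
  constructor <;> intro hp <;> by_contra hc <;> simp [hp, hc] at h

lemma key5 {A : Type*} [CommRing A] (n : ℕ) (c : ℕ → ℤ → A) (lam : ℕ → ℤ) :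
    ∑ᶠ b ∈ {b : ℕ → ℕ → ℕ | (∀ i j, b i j ≤ 1) ∧ IsRaisMon n b},
      (-1:A) ^ degFam n b * ∏ k ∈ Icc 1 n, c k (RapplyN n b lam k)
    = ∑ t ∈ (Pn n).powerset, ((-1:ℤ)^t.card) •
        (∏ k ∈ Icc 1 n, c k (lam k + (∑ p ∈ t, (dlt p.1 - dlt p.2)) k)) := by
  rw [Phi_image, finsum_mem_image (Phi_injOn n), finsum_mem_coe_finset]
  refine Finset.sum_congr rfl fun t ht => ?_
  rw [Finset.mem_powerset] at ht
  rw [degFam_Phi n t ht, zsmul_eq_mul]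
  congr 1
  · push_cast
    ring
  · exact Finset.prod_congr rfl fun k _ => by rw [Rapply_Phi n t ht lam k]

end SchurAux8

/-- `A` is a commutative ring with elements `c i r` for `1 ≤ i ≤ ℓ`, `r ∈ ℤ`,
vanishing for `r < 0`.  For a partition `λ = (λ 1 ≥ ⋯ ≥ λ ℓ ≥ 0)`, the Schur determinant
`Δ_λ(c) = det (c i (λ i + j - i))_{1 ≤ i,j ≤ ℓ}` equals
`Σ_b (-1)^{|b|} ∏_{k=1}^ℓ c k (R_b(λ) k)`, the sum over all `{0,1}`-families
`b = (b i j)_{1 ≤ i < j ≤ ℓ}`; that is, `Δ_λ(c)` is the evaluation of the raising operator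
`R^{(ℓ)} = ∏_{1 ≤ i < j ≤ ℓ} (1 - R_{ij})` applied to `c 1 (λ 1) ⋯ c ℓ (λ ℓ)`. -/
theorem schur_determinant_eq_raising_operator
    {A : Type*} [CommRing A] (ℓ : ℕ) (hℓ : 1 ≤ ℓ)
    (c : ℕ → ℤ → A) (hc : ∀ i r, r < 0 → c i r = 0)
    (lam : ℕ → ℤ)
    (hanti : ∀ i, 1 ≤ i → i < ℓ → lam (i + 1) ≤ lam i) (hpos : 0 ≤ lam ℓ) :
    Matrix.det (Matrix.of fun i j : Fin ℓ =>
        c (i.1 + 1) (lam (i.1 + 1) + (j.1 : ℤ) - (i.1 : ℤ)))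
      = ∑ᶠ b ∈ {b : ℕ → ℕ → ℕ | (∀ i j, b i j ≤ 1) ∧ IsRaisMon ℓ b},
          (-1 : A) ^ degFam ℓ b * ∏ k ∈ Finset.Icc 1 ℓ, c k (RapplyN ℓ b lam k) := by
  rw [key5 ℓ c lam, ← key4 ℓ c lam]
  exact (key3 ℓ (fun a => ∏ k ∈ Finset.Icc 1 ℓ, c k (lam k + a k))).symm
end
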